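/- (Proposition 4.1, converse direction, single-IFS case) Let $g : I \to \mathbb{R}$ be continuous satisfying $g(L_n(x)) = \gamma_n g(x) + q_n(x)$, and let $\hat{g} : I \to \mathbb{R}$ be a continuous function satisfying $\hat{g}(L_n(x)) = \hat{\gamma}_n \hat{g}(x) + \hat{q}_n(x)$ with $\hat{\gamma}_n = a_n \gamma_n$, $\hat{q}_n(x) = \hat{q}_n(x_0) + a_n \int_{x_0}^x q_n(t)\,dt$ with $\hat q_n(x_0) = \hat y_{n-1} - a_n\gamma_n \hat y_0$, and endpoint values $\hat{g}(x_0) = \hat{y}_0$, $\hat{g}(x_N) = \hat{y}_N$ (with $\hat y_n$ as determined by the integral relations). Then $\hat{g}(x) = \hat{y}_0 + \int_{x_0}^x g(t)\,dt$; in particular $\hat{g}$ is differentiable and $\hat{g}'(x) = g(x)$ for all $x \in I$. -/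

import Mathlib

open Set intervalIntegral

/-- Proposition 4.1, converse direction, single-IFS case: if `ĝ`
is a continuous solution of the self-referential equation with parameters
`γ̂ n = a n γ n`, `q̂ n (x) = ŷ_{n-1} - a n γ n ŷ₀ + a n ∫_{x₀}^x q n` and the
prescribed endpoint values, then `ĝ(x) = ŷ₀ + ∫_{x₀}^x g`; in particular `ĝ` is
differentiable with `ĝ' = g` on `I`. -/
theorem stmt_15 (N : ℕ) (hN : 1 ≤ N) (x : ℕ → ℝ)
    (hx : ∀ i, i < N → x i < x (i + 1))
    (a b γ : ℕ → ℝ)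
    (ha : ∀ n ∈ Finset.Icc 1 N, 0 < a n ∧ a n < 1)
    (hγ : ∀ n ∈ Finset.Icc 1 N, |γ n| < 1)
    (L : ℕ → ℝ → ℝ) (hL : ∀ n t, L n t = a n * t + b n)
    (hL0 : ∀ n ∈ Finset.Icc 1 N, L n (x 0) = x (n - 1))
    (hLN : ∀ n ∈ Finset.Icc 1 N, L n (x N) = x n)
    (q : ℕ → ℝ → ℝ)
    (hq : ∀ n ∈ Finset.Icc 1 N, ContinuousOn (q n) (Icc (x 0) (x N)))
    (g : ℝ → ℝ) (hg : ContinuousOn g (Icc (x 0) (x N)))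
    (hfe : ∀ n ∈ Finset.Icc 1 N, ∀ t ∈ Icc (x 0) (x N),
      g (L n t) = γ n * g t + q n t)
    (yhat0 : ℝ) (yhat : ℕ → ℝ)
    (hyhat : ∀ j ≤ N, yhat j = yhat0 + ∫ s in (x 0)..(x j), g s)
    (ghat : ℝ → ℝ) (hghatc : ContinuousOn ghat (Icc (x 0) (x N)))
    (hghat0 : ghat (x 0) = yhat0) (hghatN : ghat (x N) = yhat N)
    (hghatfe : ∀ n ∈ Finset.Icc 1 N, ∀ t ∈ Icc (x 0) (x N),
      ghat (L n t) = (a n * γ n) * ghat t +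
        (yhat (n - 1) - a n * γ n * yhat0 + a n * ∫ s in (x 0)..t, q n s)) :
    (∀ t ∈ Icc (x 0) (x N), ghat t = yhat0 + ∫ s in (x 0)..t, g s) ∧
    (∀ t ∈ Icc (x 0) (x N), HasDerivWithinAt ghat (g t) (Icc (x 0) (x N)) t) := by
  -- monotonicity of the knots
  have hmono : ∀ i j, i ≤ j → j ≤ N → x i ≤ x j := by
    intro i j hij hjN
    induction j with
    | zero => simp_all
    | succ k ih =>
      rcases Nat.lt_or_ge i (k+1) with h | h
      · exact le_trans (ih (Nat.lt_succ_iff.mp h) (le_trans (Nat.le_succ k) hjN))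
          (hx k (Nat.lt_of_succ_le hjN)).le
      · have : i = k + 1 := le_antisymm hij h
        simp [this]
  have hx0N : x 0 ≤ x N := hmono 0 N (Nat.zero_le N) le_rfl
  set I : Set ℝ := Icc (x 0) (x N) with hI
  have hInt : ∀ c ∈ I, ∀ d ∈ I, IntervalIntegrable g MeasureTheory.volume c d := by
    intro c hc d hd
    exact (hg.mono (uIcc_subset_Icc hc hd)).intervalIntegrable
  -- endpoints in I
  have hxmem : ∀ j ≤ N, x j ∈ I := fun j hj =>
    ⟨hmono 0 j (Nat.zero_le j) hj, hmono j N hj le_rfl⟩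
  -- L n maps I into I
  have hLmem : ∀ n ∈ Finset.Icc 1 N, ∀ t ∈ I, L n t ∈ I := by
    intro n hn t ht
    have hn' := Finset.mem_Icc.mp hn
    have ha' := ha n hn
    have h1 : L n (x 0) ≤ L n t := by
      rw [hL, hL]; nlinarith [ht.1]
    have h2 : L n t ≤ L n (x N) := by
      rw [hL, hL]; nlinarith [ht.2]
    rw [hL0 n hn] at h1; rw [hLN n hn] at h2
    constructor
    · exact le_trans (hmono 0 (n-1) (Nat.zero_le _) (le_trans (Nat.sub_le n 1) hn'.2)) h1
    · exact le_trans h2 (hmono n N hn'.2 le_rfl)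
  -- the primitive
  set G : ℝ → ℝ := fun t => yhat0 + ∫ s in (x 0)..t, g s with hG
  -- G satisfies the same functional equation
  have hGfe : ∀ n ∈ Finset.Icc 1 N, ∀ t ∈ I, G (L n t) = (a n * γ n) * G t +
      (yhat (n - 1) - a n * γ n * yhat0 + a n * ∫ s in (x 0)..t, q n s) := by
    intro n hn t ht
    have hn' := Finset.mem_Icc.mp hn
    have ha' := ha n hn
    have han : a n ≠ 0 := ne_of_gt ha'.1
    have hsub : uIcc (x 0) t ⊆ I := uIcc_subset_Icc (hxmem 0 (Nat.zero_le N)) ht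
    -- change of variables
    have hcv : (∫ s in (x (n-1))..(L n t), g s) =
        a n * ∫ u in (x 0)..t, g (L n u) := by
      rw [hL0 n hn |>.symm]
      have := intervalIntegral.integral_comp_mul_add g han (b n) (a := x 0) (b := t)
      simp only [smul_eq_mul] at this
      have h2 : ∀ u, g (L n u) = g (a n * u + b n) := fun u => by rw [hL]
      rw [hL, hL]
      rw [intervalIntegral.integral_congr (g := fun u => g (a n * u + b n))
        (fun u _ => h2 u), this]
      field_simp
    -- rewrite the inner integral using the functional equation for g
    have hgi : (∫ u in (x 0)..t, g (L n u)) =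
        γ n * (∫ u in (x 0)..t, g u) + ∫ u in (x 0)..t, q n u := by
      have hqint : IntervalIntegrable (q n) MeasureTheory.volume (x 0) t :=
        ((hq n hn).mono hsub).intervalIntegrable
      have hgint : IntervalIntegrable g MeasureTheory.volume (x 0) t :=
        hInt _ (hxmem 0 (Nat.zero_le N)) _ ht
      rw [intervalIntegral.integral_congr
        (g := fun u => γ n * g u + q n u) (fun u hu => hfe n hn u (hsub hu))]
      rw [intervalIntegral.integral_add (hgint.const_mul _) hqint,
        intervalIntegral.integral_const_mul]
    -- split the integral from x 0 to L n t at x (n-1)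
    have hsplit : (∫ s in (x 0)..(L n t), g s) =
        (∫ s in (x 0)..(x (n-1)), g s) + ∫ s in (x (n-1))..(L n t), g s := by
      rw [intervalIntegral.integral_add_adjacent_intervals
        (hInt _ (hxmem 0 (Nat.zero_le N)) _ (hxmem (n-1) (le_trans (Nat.sub_le n 1) hn'.2)))
        (hInt _ (hxmem (n-1) (le_trans (Nat.sub_le n 1) hn'.2)) _ (hLmem n hn t ht))]
    have hstart : x (n-1) = L n (x 0) := (hL0 n hn).symm
    have hy := hyhat (n-1) (le_trans (Nat.sub_le n 1) hn'.2)
    simp only [hG]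
    rw [hsplit, hcv, hgi, hy]
    ring
  -- difference vanishes on I
  have hGc : ContinuousOn G I := by
    have : ContinuousOn (fun t => ∫ s in (x 0)..t, g s) I := by
      have := intervalIntegral.continuousOn_primitive_interval
        (f := g) (a := x 0) (b := x N) (μ := MeasureTheory.volume)
        (by rw [uIcc_of_le hx0N]; exact hg.integrableOn_compact isCompact_Icc)
      rwa [uIcc_of_le hx0N] at this
    exact continuousOn_const.add this
  set h : ℝ → ℝ := fun t => ghat t - G t with hh
  have hhc : ContinuousOn (fun t => |h t|) I := (hghatc.sub hGc).abs
  have hhfe : ∀ n ∈ Finset.Icc 1 N, ∀ t ∈ I, h (L n t) = (a n * γ n) * h t := by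
    intro n hn t ht
    simp only [hh]
    rw [hghatfe n hn t ht, hGfe n hn t ht]; ring
  -- covering: every point of I is L n t for some n, t
  have hcover : ∀ s ∈ I, ∃ n ∈ Finset.Icc 1 N, ∃ t ∈ I, L n t = s := by
    intro s hs
    -- find n with x (n-1) ≤ s ≤ x n
    have key : ∀ k, 1 ≤ k → k ≤ N → s ≤ x k →
        ∃ n, 1 ≤ n ∧ n ≤ k ∧ x (n-1) ≤ s ∧ s ≤ x n := by
      intro k
      induction k with
      | zero => omega
      | succ m ih =>
        intro _ hkN hsk
        rcases Nat.eq_zero_or_pos m with hm | hm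
        · subst hm; exact ⟨1, le_rfl, le_rfl, by simpa using hs.1, hsk⟩
        · by_cases hsm : s ≤ x m
          · obtain ⟨n, h1, h2, h3, h4⟩ := ih hm (le_trans (Nat.le_succ m) hkN) hsm
            exact ⟨n, h1, le_trans h2 (Nat.le_succ m), h3, h4⟩
          · exact ⟨m+1, by omega, le_rfl, by simpa using (not_le.mp hsm).le, hsk⟩
    obtain ⟨n, h1, h2, h3, h4⟩ := key N hN le_rfl hs.2
    have hn : n ∈ Finset.Icc 1 N := Finset.mem_Icc.mpr ⟨h1, h2⟩
    have ha' := ha n hn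
    have han : a n ≠ 0 := ne_of_gt ha'.1
    refine ⟨n, hn, (s - b n) / a n, ?_, ?_⟩
    · constructor
      · rw [le_div_iff₀ ha'.1]
        have := hL0 n hn; rw [hL] at this
        nlinarith
      · rw [div_le_iff₀ ha'.1]
        have := hLN n hn; rw [hL] at this
        nlinarith
    · rw [hL]; field_simp; ring
  -- maximum principle: h = 0 on I
  have hzero : ∀ t ∈ I, h t = 0 := by
    obtain ⟨s₀, hs₀, hmax⟩ := IsCompact.exists_isMaxOn (isCompact_Icc)
      ⟨x 0, hxmem 0 (Nat.zero_le N)⟩ hhc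
    have hmax' : ∀ u ∈ I, |h u| ≤ |h s₀| := fun u hu => hmax hu
    obtain ⟨n, hn, t, ht, hLt⟩ := hcover s₀ hs₀
    have ha' := ha n hn
    have hγ' := hγ n hn
    have hs0 : |h s₀| = |a n * γ n| * |h t| := by
      rw [← hLt, hhfe n hn t ht, abs_mul]
    have hc1 : |a n * γ n| < 1 := by
      rw [abs_mul, abs_of_pos ha'.1]
      calc a n * |γ n| ≤ 1 * |γ n| := by nlinarith [abs_nonneg (γ n)]
        _ = |γ n| := one_mul _
        _ < 1 := hγ'
    have : |h s₀| ≤ |a n * γ n| * |h s₀| :=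
      calc |h s₀| = |a n * γ n| * |h t| := hs0
        _ ≤ |a n * γ n| * |h s₀| :=
          mul_le_mul_of_nonneg_left (hmax' t ht) (abs_nonneg _)
    have hzero0 : |h s₀| = 0 := by nlinarith [abs_nonneg (h s₀)]
    intro u hu
    have := le_trans (hmax' u hu) (le_of_eq hzero0)
    exact abs_eq_zero.mp (le_antisymm this (abs_nonneg _))
  have heq : ∀ t ∈ I, ghat t = yhat0 + ∫ s in (x 0)..t, g s := by
    intro t ht
    have := hzero t ht
    simp only [hh, hG] at this ⊢
    linarith
  refine ⟨heq, ?_⟩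
  intro t ht
  haveI : Fact (t ∈ Icc (x 0) (x N)) := ⟨ht⟩
  have hder : HasDerivWithinAt (fun u => ∫ s in (x 0)..u, g s) (g t) I t := by
    exact intervalIntegral.integral_hasDerivWithinAt_right
      (hInt _ (hxmem 0 (Nat.zero_le N)) _ ht)
      (hg.stronglyMeasurableAtFilter_nhdsWithin measurableSet_Icc t)
      (hg t ht)
  have hder' : HasDerivWithinAt G (g t) I t := by
    simpa [hG] using hder
  exact hder'.congr (fun u hu => (heq u hu)) (heq t ht)
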